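/- arXiv:2107.08763 — 4 statements merged into one kernel-verified Lean document; each statement's English description precedes it below -/
import Mathlib

section
/- The function f(x, y) = x^j / y^{j-1} is jointly convex on the positive quadrant ℝ₊² for every real j ≥ 1. That is, for all x₀, x₁ > 0, y₀, y₁ > 0 and a ∈ [0,1], letting x_a = a x₀ + (1-a) x₁ and y_a = a y₀ + (1-a) y₁, we have x_a^j / y_a^{j-1} ≤ a · x₀^j / y₀^{j-1} + (1-a) · x₁^j / y₁^{j-1}. -/
lemma aux_mul_div_rpow (j x y : ℝ) (hx : 0 < x) (hy : 0 < y) :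
    y * (x / y) ^ j = x ^ j / y ^ (j - 1) := by
  rw [Real.div_rpow hx.le hy.le, Real.rpow_sub hy, Real.rpow_one]
  have hyj : (0:ℝ) < y ^ j := Real.rpow_pos_of_pos hy j
  field_simp

theorem rpow_div_jointly_convex (j : ℝ) (hj : 1 ≤ j)
    (x₀ x₁ y₀ y₁ a : ℝ) (hx₀ : 0 < x₀) (hx₁ : 0 < x₁) (hy₀ : 0 < y₀) (hy₁ : 0 < y₁)
    (ha₀ : 0 ≤ a) (ha₁ : a ≤ 1) :
    (a * x₀ + (1 - a) * x₁) ^ j / (a * y₀ + (1 - a) * y₁) ^ (j - 1)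
      ≤ a * (x₀ ^ j / y₀ ^ (j - 1)) + (1 - a) * (x₁ ^ j / y₁ ^ (j - 1)) := by
  have hb0 : 0 ≤ 1 - a := by linarith
  have hYA : 0 < a * y₀ + (1 - a) * y₁ := by nlinarith [lt_min hy₀ hy₁, min_le_left y₀ y₁, min_le_right y₀ y₁, mul_nonneg ha₀ (sub_nonneg.mpr (min_le_left y₀ y₁)), mul_nonneg hb0 (sub_nonneg.mpr (min_le_right y₀ y₁))]
  set YA := a * y₀ + (1 - a) * y₁ with hYAdef
  have hXA : 0 < a * x₀ + (1 - a) * x₁ := by nlinarith [lt_min hx₀ hx₁, mul_nonneg ha₀ (sub_nonneg.mpr (min_le_left x₀ x₁)), mul_nonneg hb0 (sub_nonneg.mpr (min_le_right x₀ x₁))]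
  have hl : 0 ≤ a * y₀ / YA := by positivity
  have hm : 0 ≤ (1 - a) * y₁ / YA := by
    have : 0 ≤ (1 - a) * y₁ := by positivity
    positivity
  have hsum : a * y₀ / YA + (1 - a) * y₁ / YA = 1 := by
    field_simp
    exact hYAdef.symm
  have hconv := (convexOn_rpow hj).2
    (Set.mem_Ici.mpr (div_pos hx₀ hy₀).le)
    (Set.mem_Ici.mpr (div_pos hx₁ hy₁).le) hl hm hsum
  have hcomb : a * y₀ / YA * (x₀ / y₀) + (1 - a) * y₁ / YA * (x₁ / y₁)
      = (a * x₀ + (1 - a) * x₁) / YA := by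
    field_simp
  simp only [smul_eq_mul] at hconv
  rw [hcomb] at hconv
  have hmul := mul_le_mul_of_nonneg_left hconv hYA.le
  calc (a * x₀ + (1 - a) * x₁) ^ j / YA ^ (j - 1)
      = YA * ((a * x₀ + (1 - a) * x₁) / YA) ^ j := (aux_mul_div_rpow j _ _ hXA hYA).symm
    _ ≤ YA * (a * y₀ / YA * (x₀ / y₀) ^ j + (1 - a) * y₁ / YA * (x₁ / y₁) ^ j) := hmul
    _ = a * (y₀ * (x₀ / y₀) ^ j) + (1 - a) * (y₁ * (x₁ / y₁) ^ j) := by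
        field_simp
    _ = a * (x₀ ^ j / y₀ ^ (j - 1)) + (1 - a) * (x₁ ^ j / y₁ ^ (j - 1)) := by
        rw [aux_mul_div_rpow j _ _ hx₀ hy₀, aux_mul_div_rpow j _ _ hx₁ hy₁]
end

section
/- Let k ≥ 1 be an integer, ε₀ ≥ 0, p = 1/(e^{ε₀}+1), and let μ₀ be the Binomial(k, p) distribution on {0,...,k}. Define μ₁(m) = (1-p)·C(k-1, m-1)·p^{m-1}(1-p)^{k-m} + p·C(k-1, m)·p^m (1-p)^{k-m-1} (with the convention C(k-1,-1)=0 and C(k-1,k)=0). Then for every m ∈ {0,...,k} with μ₀(m) > 0, μ₁(m)/μ₀(m) - 1 = ((e^{2ε₀}-1)/(k e^{ε₀})) · (m - k/(e^{ε₀}+1)). -/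
open Real

noncomputable def μ₀ (k : ℕ) (p : ℝ) (m : ℕ) : ℝ :=
  (k.choose m : ℝ) * p ^ m * (1 - p) ^ (k - m)

noncomputable def μ₁ (k : ℕ) (p : ℝ) (m : ℕ) : ℝ :=
  (1 - p) * (if m = 0 then 0 else ((k - 1).choose (m - 1) : ℝ)) * p ^ (m - 1) * (1 - p) ^ (k - m)
    + p * ((k - 1).choose m : ℝ) * p ^ m * (1 - p) ^ (k - m - 1)

theorem ratio_identity_2RR (k : ℕ) (hk : 1 ≤ k) (ε₀ : ℝ) (hε₀ : 0 ≤ ε₀)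
    (p : ℝ) (hp : p = 1 / (Real.exp ε₀ + 1))
    (m : ℕ) (hm : m ≤ k) (hpos : 0 < μ₀ k p m) :
    μ₁ k p m / μ₀ k p m - 1
      = ((Real.exp (2 * ε₀) - 1) / (k * Real.exp ε₀)) * ((m : ℝ) - k / (Real.exp ε₀ + 1)) := by
  have hE : 0 < Real.exp ε₀ := Real.exp_pos _
  set E := Real.exp ε₀ with hEdef
  have hE1 : (0:ℝ) < E + 1 := by linarith
  have he2 : Real.exp (2*ε₀) = E^2 := by rw [two_mul, Real.exp_add]; ring
  have hp0 : 0 < p := by rw [hp]; positivity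
  have h1p : 1 - p = E / (E+1) := by rw [hp]; field_simp; ring
  have h1p0 : 0 < 1 - p := by rw [h1p]; positivity
  have hk0 : (0:ℝ) < k := by exact_mod_cast hk
  have hEne : E ≠ 0 := ne_of_gt hE
  have h1ne : E + 1 ≠ 0 := ne_of_gt hE1
  have hpne : p ≠ 0 := ne_of_gt hp0
  have h1pne : (1:ℝ) - p ≠ 0 := ne_of_gt h1p0
  rw [he2]
  rcases Nat.eq_zero_or_pos m with hm0 | hm0
  · subst hm0
    simp only [μ₀, μ₁]
    norm_num
    have hsplit : (1-p)^k = (1-p)^(k-1)*(1-p) := by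
      rw [← pow_succ, Nat.sub_add_cancel hk]
    rw [hsplit, h1p, hp]
    have hpow : (E/(E+1))^(k-1) ≠ 0 := by positivity
    field_simp
    ring
  · rcases eq_or_lt_of_le hm with hmk | hmk
    · subst hmk
      have hch : (m-1).choose m = 0 := Nat.choose_eq_zero_of_lt (by omega)
      simp only [μ₀, μ₁, Nat.choose_self, Nat.cast_one, one_mul, Nat.sub_self, pow_zero,
        mul_one, hch, Nat.cast_zero, zero_mul, mul_zero, add_zero,
        if_neg (Nat.pos_iff_ne_zero.mp hm0)]
      have hsplit : p^m = p^(m-1)*p := by rw [← pow_succ, Nat.sub_add_cancel hm0]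
      rw [hsplit, h1p, hp]
      have hpow : (1/(E+1))^(m-1) ≠ 0 := by positivity
      field_simp
      ring
    · -- 0 < m < k
      have hC1 : (k:ℝ) * ((k-1).choose (m-1)) = m * (k.choose m) := by
        have h := Nat.add_one_mul_choose_eq (k-1) (m-1)
        rw [Nat.sub_add_cancel hk,
          Nat.sub_add_cancel hm0] at h
        have h2 := congrArg (Nat.cast (R := ℝ)) h
        push_cast at h2
        linarith
      have hCadd : (k.choose m : ℝ) = (k-1).choose m + (k-1).choose (m-1) := by
        have h4 := Nat.choose_succ_succ (k-1) (m-1)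
        rw [Nat.succ_eq_add_one, Nat.succ_eq_add_one, Nat.sub_add_cancel hm0,
          Nat.sub_add_cancel hk] at h4
        push_cast [h4]; ring
      have hC2 : (k:ℝ) * ((k-1).choose m) = ((k:ℝ) - m) * (k.choose m) := by
        have h5 : (k:ℝ) * ((k-1).choose m) = k * (k.choose m) - k * ((k-1).choose (m-1)) := by
          rw [hCadd]; ring
        rw [h5, hC1]; ring
      have hsp : p^m = p^(m-1)*p := by rw [← pow_succ, Nat.sub_add_cancel hm0]
      have hsq : (1-p)^(k-m) = (1-p)^(k-m-1)*(1-p) := by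
        rw [← pow_succ, Nat.sub_add_cancel (by omega)]
      have keq : (k:ℝ) * p * (1-p) * μ₁ k p m
          = μ₀ k p m * ((m:ℝ)*(1-p)^2 + ((k:ℝ)-m)*p^2) := by
        simp only [μ₀, μ₁, if_neg (Nat.pos_iff_ne_zero.mp hm0)]
        rw [hsp, hsq]
        linear_combination (p^(m-1) * (1-p)^(k-m-1) * p * (1-p)) *
          ((1-p)^2 * hC1 + p^2 * hC2)
      have hne : μ₀ k p m ≠ 0 := ne_of_gt hpos
      have hD : (k:ℝ)*p*(1-p) ≠ 0 := by positivity
      have key : μ₁ k p m = μ₀ k p m * (((m:ℝ)*(1-p)^2 + ((k:ℝ)-m)*p^2) / ((k:ℝ)*p*(1-p))) := by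
        field_simp
        linear_combination keq
      rw [key, mul_div_cancel_left₀ _ hne]
      rw [h1p, hp]
      field_simp
      ring
end

section
/- Monotonicity under convex combination (data processing for ternary divergence under mixtures): let Ω be a finite set and suppose P = Σ_{c∈I} w_c P_c, Q = Σ_c w_c Q_c, R = Σ_c w_c R_c where w is a probability vector over a finite index set I, and each P_c, Q_c, R_c is a pmf on Ω with R_c > 0 everywhere. Then for α ≥ 1, Σ_h |P(h)-Q(h)|^α / R(h)^{α-1} ≤ Σ_{c∈I} w_c Σ_h |P_c(h)-Q_c(h)|^α / R_c(h)^{α-1}. -/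
open Finset Real

lemma radon_key {I : Type*} [Fintype I] (w a b : I → ℝ)
    (hw : ∀ c, 0 ≤ w c) (ha : ∀ c, 0 ≤ a c) (hb : ∀ c, 0 < b c)
    (hT : 0 < ∑ c, w c * b c) (α : ℝ) (hα : 1 ≤ α) :
    (∑ c, w c * a c) ^ α / (∑ c, w c * b c) ^ (α - 1)
      ≤ ∑ c, w c * (a c ^ α / b c ^ (α - 1)) := by
  have hα0 : (0:ℝ) < α := lt_of_lt_of_le one_pos hα
  set S := ∑ c, w c * a c with hS
  set T := ∑ c, w c * b c with hTdef
  set D := ∑ c, w c * (a c ^ α / b c ^ (α - 1)) with hD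
  have hS0 : 0 ≤ S := Finset.sum_nonneg fun c _ => mul_nonneg (hw c) (ha c)
  have hD0 : 0 ≤ D := Finset.sum_nonneg fun c _ => mul_nonneg (hw c)
    (div_nonneg (rpow_nonneg (ha c) _) (rpow_nonneg (hb c).le _))
  -- Hölder with weights v c = w c * b c and f c = a c / b c
  have holder := Real.inner_le_weight_mul_Lp_of_nonneg Finset.univ hα
    (fun c => w c * b c) (fun c => a c / b c)
    (fun c => mul_nonneg (hw c) (hb c).le)
    (fun c => div_nonneg (ha c) (hb c).le)
  have h1 : ∑ c, (w c * b c) * (a c / b c) = S := by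
    apply Finset.sum_congr rfl
    intro c _
    have hbne := (hb c).ne'
    field_simp
  have h2 : ∑ c, (w c * b c) * (a c / b c) ^ α = D := by
    apply Finset.sum_congr rfl
    intro c _
    rw [Real.div_rpow (ha c) (hb c).le]
    rw [Real.rpow_sub (hb c)]
    have hbne := (hb c).ne'
    have hbp := Real.rpow_pos_of_pos (hb c) α
    field_simp
    rw [Real.rpow_one]
    ring
  rw [h1, h2] at holder
  -- holder : S ≤ T ^ (1 - α⁻¹) * D ^ α⁻¹
  have key : S ^ α ≤ T ^ (α - 1) * D := by
    calc S ^ α ≤ (T ^ (1 - α⁻¹) * D ^ α⁻¹) ^ α := by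
          apply Real.rpow_le_rpow hS0 holder hα0.le
      _ = T ^ (α - 1) * D := by
          rw [Real.mul_rpow (rpow_nonneg hT.le _) (rpow_nonneg hD0 _),
            ← Real.rpow_mul hT.le, ← Real.rpow_mul hD0,
            inv_mul_cancel₀ hα0.ne', Real.rpow_one]
          congr 2
          field_simp
  rw [div_le_iff₀ (Real.rpow_pos_of_pos hT _)]
  linarith [key]

theorem ternary_div_convex_combination {Ω I : Type*} [Fintype Ω] [Fintype I]
    (w : I → ℝ) (hw : ∀ c, 0 ≤ w c) (hws : ∑ c, w c = 1)
    (P Q R : I → Ω → ℝ)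
    (hP : ∀ c h, 0 ≤ P c h) (hPs : ∀ c, ∑ h, P c h = 1)
    (hQ : ∀ c h, 0 ≤ Q c h) (hQs : ∀ c, ∑ h, Q c h = 1)
    (hR : ∀ c h, 0 < R c h) (hRs : ∀ c, ∑ h, R c h = 1)
    (α : ℝ) (hα : 1 ≤ α) :
    ∑ h, |(∑ c, w c * P c h) - (∑ c, w c * Q c h)| ^ α / (∑ c, w c * R c h) ^ (α - 1)
      ≤ ∑ c, w c * ∑ h, |P c h - Q c h| ^ α / R c h ^ (α - 1) := by
  have hwp : ∃ c, 0 < w c := by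
    by_contra hcon
    push_neg at hcon
    have : ∑ c, w c ≤ 0 := Finset.sum_nonpos fun c _ => hcon c
    linarith
  obtain ⟨c₀, hc₀⟩ := hwp
  have swap : ∑ c, w c * ∑ h, |P c h - Q c h| ^ α / R c h ^ (α - 1)
      = ∑ h, ∑ c, w c * (|P c h - Q c h| ^ α / R c h ^ (α - 1)) := by
    simp_rw [Finset.mul_sum]
    rw [Finset.sum_comm]
  rw [swap]
  apply Finset.sum_le_sum
  intro h _
  have hT : 0 < ∑ c, w c * R c h := by
    apply Finset.sum_pos' (fun c _ => mul_nonneg (hw c) (hR c h).le)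
    exact ⟨c₀, Finset.mem_univ c₀, mul_pos hc₀ (hR c₀ h)⟩
  have habs : |(∑ c, w c * P c h) - (∑ c, w c * Q c h)| ≤ ∑ c, w c * |P c h - Q c h| := by
    rw [← Finset.sum_sub_distrib]
    calc |∑ c, (w c * P c h - w c * Q c h)| ≤ ∑ c, |w c * P c h - w c * Q c h| :=
          Finset.abs_sum_le_sum_abs _ _
      _ = ∑ c, w c * |P c h - Q c h| := by
          apply Finset.sum_congr rfl
          intro c _
          rw [← mul_sub, abs_mul, abs_of_nonneg (hw c)]
  calc |(∑ c, w c * P c h) - (∑ c, w c * Q c h)| ^ α / (∑ c, w c * R c h) ^ (α - 1)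
      ≤ (∑ c, w c * |P c h - Q c h|) ^ α / (∑ c, w c * R c h) ^ (α - 1) := by
        gcongr
    _ ≤ ∑ c, w c * (|P c h - Q c h| ^ α / R c h ^ (α - 1)) :=
        radon_key w _ _ hw (fun c => abs_nonneg _) (fun c => hR c h) hT α hα
end

section
/- From ternary |χ|^α-DP of a shuffle mechanism to RDP of its subsampled version (Lemma 4, abstract form): let Ω be a finite set and suppose for each integer α with 2 ≤ α ≤ λ there is a pmf pair decomposition M = γ P_E + (1-γ) P_{E^c} and M' = γ Q_E + (1-γ) P_{E^c} on Ω (γ ∈ (0,1]) with M' > 0 everywhere, and suppose Σ_h |P_E(h)-Q_E(h)|^α / M'(h)^{α-1} ≤ ζ(α)^α for each such α. Then Σ_h M'(h) (M(h)/M'(h))^λ ≤ 1 + Σ_{α=2}^{λ} C(λ,α) γ^α ζ(α)^α. -/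
theorem ternary_dp_to_subsampled_rdp {Ω : Type*} [Fintype Ω]
    (lam : ℕ) (hlam : 2 ≤ lam) (γ : ℝ) (hγ₀ : 0 < γ) (hγ₁ : γ ≤ 1)
    (PE QE PEc : Ω → ℝ)
    (hPE : ∀ h, 0 ≤ PE h) (hPEs : ∑ h, PE h = 1)
    (hQE : ∀ h, 0 ≤ QE h) (hQEs : ∑ h, QE h = 1)
    (hPEc : ∀ h, 0 ≤ PEc h) (hPEcs : ∑ h, PEc h = 1)
    (hM' : ∀ h, 0 < γ * QE h + (1 - γ) * PEc h)
    (ζ : ℕ → ℝ)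
    (hζ : ∀ α ∈ Finset.Icc 2 lam,
      ∑ h, |PE h - QE h| ^ α / (γ * QE h + (1 - γ) * PEc h) ^ (α - 1) ≤ ζ α ^ α) :
    ∑ h, (γ * QE h + (1 - γ) * PEc h)
        * ((γ * PE h + (1 - γ) * PEc h) / (γ * QE h + (1 - γ) * PEc h)) ^ lam
      ≤ 1 + ∑ α ∈ Finset.Icc 2 lam, (lam.choose α : ℝ) * γ ^ α * ζ α ^ α := by
  set M' : Ω → ℝ := fun h => γ * QE h + (1 - γ) * PEc h with hM'def
  have hM'pos : ∀ h, 0 < M' h := hM'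
  have key : ∀ h : Ω, M' h * ((γ * PE h + (1 - γ) * PEc h) / M' h) ^ lam
      = ∑ j ∈ Finset.range (lam + 1),
          M' h * ((γ * (PE h - QE h)) / M' h) ^ j * (lam.choose j : ℝ) := by
    intro h
    have h0 : M' h ≠ 0 := (hM'pos h).ne'
    have hr : (γ * PE h + (1 - γ) * PEc h) / M' h
        = γ * (PE h - QE h) / M' h + 1 := by
      field_simp
      ring
    rw [hr, add_pow, Finset.mul_sum]
    refine Finset.sum_congr rfl fun j hj => ?_
    ring
  rw [Finset.sum_congr rfl fun h _ => key h, Finset.sum_comm]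
  have hsplit : Finset.range (lam + 1) = insert 0 (insert 1 (Finset.Icc 2 lam)) := by
    ext x
    simp only [Finset.mem_range, Finset.mem_insert, Finset.mem_Icc]
    omega
  have h0notin : (0 : ℕ) ∉ insert 1 (Finset.Icc 2 lam) := by
    simp only [Finset.mem_insert, Finset.mem_Icc]; omega
  have h1notin : (1 : ℕ) ∉ Finset.Icc 2 lam := by
    simp only [Finset.mem_Icc]; omega
  rw [hsplit, Finset.sum_insert h0notin, Finset.sum_insert h1notin]
  have t0 : ∑ h : Ω, M' h * ((γ * (PE h - QE h)) / M' h) ^ 0 * (lam.choose 0 : ℝ) = 1 := by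
    simp only [pow_zero, mul_one, Nat.choose_zero_right, Nat.cast_one]
    simp only [hM'def]
    rw [Finset.sum_add_distrib, ← Finset.mul_sum, ← Finset.mul_sum, hQEs, hPEcs]
    ring
  have t1 : ∑ h : Ω, M' h * ((γ * (PE h - QE h)) / M' h) ^ 1 * (lam.choose 1 : ℝ) = 0 := by
    have : ∀ h : Ω, M' h * ((γ * (PE h - QE h)) / M' h) ^ 1 * (lam.choose 1 : ℝ)
        = (PE h - QE h) * (γ * (lam.choose 1 : ℝ)) := by
      intro h
      have h0 : M' h ≠ 0 := (hM'pos h).ne'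
      field_simp
    rw [Finset.sum_congr rfl fun h _ => this h, ← Finset.sum_mul, Finset.sum_sub_distrib,
      hPEs, hQEs]
    ring
  rw [t0, t1]
  rw [zero_add]
  refine add_le_add_right (Finset.sum_le_sum fun j hj => ?_) 1
  have hj2 : 2 ≤ j := (Finset.mem_Icc.mp hj).1
  have step : ∀ h : Ω, M' h * ((γ * (PE h - QE h)) / M' h) ^ j * (lam.choose j : ℝ)
      ≤ (lam.choose j : ℝ) * γ ^ j * (|PE h - QE h| ^ j / M' h ^ (j - 1)) := by
    intro h
    have h0 : (0:ℝ) < M' h := hM'pos h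
    have hje : j = (j - 1) + 1 := by omega
    have hMj : M' h ^ j = M' h * M' h ^ (j - 1) := by
      conv_lhs => rw [hje]
      rw [pow_succ']
    have lhs_eq : M' h * ((γ * (PE h - QE h)) / M' h) ^ j * (lam.choose j : ℝ)
        = (lam.choose j : ℝ) * γ ^ j * ((PE h - QE h) ^ j / M' h ^ (j - 1)) := by
      rw [div_pow, mul_pow, hMj]
      field_simp
    rw [lhs_eq]
    have hpow : (PE h - QE h) ^ j ≤ |PE h - QE h| ^ j := by
      calc (PE h - QE h) ^ j ≤ |(PE h - QE h) ^ j| := le_abs_self _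
      _ = |PE h - QE h| ^ j := abs_pow _ _
    gcongr
  calc ∑ h : Ω, M' h * ((γ * (PE h - QE h)) / M' h) ^ j * (lam.choose j : ℝ)
      ≤ ∑ h : Ω, (lam.choose j : ℝ) * γ ^ j * (|PE h - QE h| ^ j / M' h ^ (j - 1)) :=
        Finset.sum_le_sum fun h _ => step h
    _ = (lam.choose j : ℝ) * γ ^ j
        * ∑ h : Ω, |PE h - QE h| ^ j / M' h ^ (j - 1) := by rw [Finset.mul_sum]
    _ ≤ (lam.choose j : ℝ) * γ ^ j * ζ j ^ j := by
        have := hζ j hj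
        gcongr
end
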